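/- Taylor formula with integral remainder for |1+t|^q: Let q ∈ (2, ∞). For every t ∈ ℝ, |1+t|^q = 1 + q t + (1/2) q (q−1) t² + (1/2) q (q−1)(q−2) ∫₀^t (t−u)² |1+u|^{q−4} (1+u) du, where the integrand is locally integrable since q > 2. -/

import Mathlib

open intervalIntegral MeasureTheory Set

private lemma odd_eq_on {s : ℝ} {c : ℝ} (x : ℝ) (hx : x ∈ Set.Ioc (0:ℝ) c) :
    |x| ^ s * x = x ^ (s + 1) := by
  have hx0 : 0 < x := hx.1
  rw [abs_of_pos hx0, Real.rpow_add_one hx0.ne']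

private lemma odd_intervalIntegrable {s : ℝ} (hs : -2 < s) (a b : ℝ) :
    IntervalIntegrable (fun x => |x| ^ s * x) volume a b := by
  have pos : ∀ c : ℝ, 0 ≤ c →
      IntervalIntegrable (fun x => |x| ^ s * x) volume 0 c := by
    intro c hc
    rw [intervalIntegrable_iff] at *
    have h1 : IntegrableOn (fun x : ℝ => x ^ (s + 1)) (Set.uIoc 0 c) volume :=
      intervalIntegrable_iff.mp (intervalIntegral.intervalIntegrable_rpow' (by linarith))
    refine h1.congr_fun ?_ measurableSet_uIoc
    intro x hx
    rw [Set.uIoc_of_le hc] at hx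
    exact (odd_eq_on x hx).symm
  have any0 : ∀ c : ℝ, IntervalIntegrable (fun x => |x| ^ s * x) volume 0 c := by
    intro c
    rcases le_or_gt 0 c with hc | hc
    · exact pos c hc
    · have h := (pos (-c) (by linarith)).neg
      rw [IntervalIntegrable.iff_comp_neg]
      simpa [abs_neg, mul_neg, neg_zero, Pi.neg_def] using h
  exact (any0 a).symm.trans (any0 b)

private lemma odd_integral {s : ℝ} (hs : -2 < s) (b : ℝ) :
    ∫ x in (0:ℝ)..b, |x| ^ s * x = |b| ^ (s + 2) / (s + 2) := by
  have hs2 : s + 2 ≠ 0 := by linarith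
  have pos : ∀ c : ℝ, 0 ≤ c →
      ∫ x in (0:ℝ)..c, |x| ^ s * x = |c| ^ (s + 2) / (s + 2) := by
    intro c hc
    have hcong : (∫ x in (0:ℝ)..c, |x| ^ s * x) = ∫ x in (0:ℝ)..c, x ^ (s + 1) := by
      refine intervalIntegral.integral_congr_ae (MeasureTheory.ae_of_all _ ?_)
      intro x hx
      rw [Set.uIoc_of_le hc] at hx
      exact odd_eq_on x hx
    rw [hcong, integral_rpow (Or.inl (by linarith : (-1:ℝ) < s + 1)),
      Real.zero_rpow (by linarith : s + 1 + 1 ≠ 0), abs_of_nonneg hc]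
    ring_nf
  rcases le_or_gt 0 b with hb | hb
  · exact pos b hb
  · calc ∫ x in (0:ℝ)..b, |x| ^ s * x
        = ∫ x in (0:ℝ)..b, -(|(-x)| ^ s * (-x)) := by
          simp only [abs_neg, mul_neg, neg_neg]
      _ = -∫ x in (0:ℝ)..b, |(-x)| ^ s * (-x) := intervalIntegral.integral_neg
      _ = -∫ x in (-b)..(0:ℝ), |x| ^ s * x := by
          rw [intervalIntegral.integral_comp_neg (fun x => |x| ^ s * x)]; norm_num
      _ = ∫ x in (0:ℝ)..(-b), |x| ^ s * x := by
          rw [intervalIntegral.integral_symm, neg_neg]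
      _ = |(-b)| ^ (s + 2) / (s + 2) := pos (-b) (by linarith)
      _ = |b| ^ (s + 2) / (s + 2) := by rw [abs_neg]

private lemma even_integral {s : ℝ} (hs : 0 < s) (b : ℝ) :
    ∫ x in (0:ℝ)..b, |x| ^ s = |b| ^ s * b / (s + 1) := by
  have pos : ∀ c : ℝ, 0 ≤ c →
      ∫ x in (0:ℝ)..c, |x| ^ s = |c| ^ s * c / (s + 1) := by
    intro c hc
    have hcong : (∫ x in (0:ℝ)..c, |x| ^ s) = ∫ x in (0:ℝ)..c, x ^ s := by
      refine intervalIntegral.integral_congr_ae (MeasureTheory.ae_of_all _ ?_)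
      intro x hx
      rw [Set.uIoc_of_le hc] at hx
      rw [abs_of_pos hx.1]
    rw [hcong, integral_rpow (Or.inl (by linarith : (-1:ℝ) < s)),
      Real.zero_rpow (by linarith : s + 1 ≠ 0), abs_of_nonneg hc]
    rcases eq_or_lt_of_le hc with hc0 | hc0
    · rw [← hc0, Real.zero_rpow (by linarith : s + 1 ≠ 0)]
      simp
    · rw [Real.rpow_add_one hc0.ne']
      ring
  rcases le_or_gt 0 b with hb | hb
  · exact pos b hb
  · calc ∫ x in (0:ℝ)..b, |x| ^ s
        = ∫ x in (0:ℝ)..b, |(-x)| ^ s := by simp only [abs_neg]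
      _ = ∫ x in (-b)..(0:ℝ), |x| ^ s := by
          rw [intervalIntegral.integral_comp_neg (fun x => |x| ^ s)]; norm_num
      _ = -∫ x in (0:ℝ)..(-b), |x| ^ s := by
          rw [intervalIntegral.integral_symm]
      _ = -(|(-b)| ^ s * (-b) / (s + 1)) := by rw [pos (-b) (by linarith)]
      _ = |b| ^ s * b / (s + 1) := by rw [abs_neg]; ring

/-- Taylor formula with integral remainder for `|1+t|^q`, `q > 2`. -/
theorem abs_one_add_rpow_taylor (q : ℝ) (hq : 2 < q) :
    ∀ t : ℝ,
      |1 + t| ^ q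
        = 1 + q * t + 1 / 2 * q * (q - 1) * t ^ 2 +
          1 / 2 * q * (q - 1) * (q - 2) *
            ∫ u in (0 : ℝ)..t, (t - u) ^ 2 * |1 + u| ^ (q - 4) * (1 + u) := by
  intro t
  set c : ℝ := 1 + t with hc
  have hq0 : q ≠ 0 := by linarith
  have hq1 : q - 1 ≠ 0 := by linarith
  have hq2 : q - 2 ≠ 0 := by linarith
  -- pointwise identities
  have habs2 : ∀ x : ℝ, |x| ^ (q - 4) * x ^ 2 = |x| ^ (q - 2) := by
    intro x
    rcases eq_or_ne x 0 with rfl | hx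
    · simp [Real.zero_rpow hq2]
    · have h : (0:ℝ) < |x| := abs_pos.mpr hx
      rw [← sq_abs, sq, ← mul_assoc, ← Real.rpow_add_one h.ne', ← Real.rpow_add_one h.ne']
      congr 1
      ring
  have hkey : ∀ x : ℝ, (c - x) ^ 2 * |x| ^ (q - 4) * x
      = c ^ 2 * (|x| ^ (q - 4) * x) - 2 * c * |x| ^ (q - 2) + |x| ^ (q - 2) * x := by
    intro x
    have h2 := habs2 x
    linear_combination (x - 2 * c) * h2
  -- substitution u ↦ 1 + u
  have hsub : (∫ u in (0 : ℝ)..t, (t - u) ^ 2 * |1 + u| ^ (q - 4) * (1 + u))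
      = ∫ x in (1:ℝ)..c, (c - x) ^ 2 * |x| ^ (q - 4) * x := by
    have h := intervalIntegral.integral_comp_add_left
      (fun x => (c - x) ^ 2 * |x| ^ (q - 4) * x) (1:ℝ) (a := 0) (b := t)
    rw [show (1:ℝ) + 0 = 1 by norm_num, show (1:ℝ) + t = c from rfl] at h
    rw [← h]
    refine intervalIntegral.integral_congr fun u _ => ?_
    have h1 : c - (1 + u) = t - u := by rw [hc]; ring
    simp only [h1]
  -- integrability
  have i1 : ∀ a b : ℝ, IntervalIntegrable (fun x => |x| ^ (q - 4) * x) volume a b :=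
    odd_intervalIntegrable (by linarith)
  have c2 : Continuous fun x : ℝ => |x| ^ (q - 2) :=
    continuous_abs.rpow_const (fun x => Or.inr (by linarith))
  have i2 : ∀ a b : ℝ, IntervalIntegrable (fun x => |x| ^ (q - 2)) volume a b :=
    fun a b => c2.intervalIntegrable a b
  have i3 : ∀ a b : ℝ, IntervalIntegrable (fun x => |x| ^ (q - 2) * x) volume a b :=
    fun a b => (c2.mul continuous_id).intervalIntegrable a b
  -- split the integral
  have hsplit : (∫ x in (1:ℝ)..c, (c - x) ^ 2 * |x| ^ (q - 4) * x)
      = c ^ 2 * (∫ x in (1:ℝ)..c, |x| ^ (q - 4) * x)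
        - 2 * c * (∫ x in (1:ℝ)..c, |x| ^ (q - 2))
        + ∫ x in (1:ℝ)..c, |x| ^ (q - 2) * x := by
    rw [← intervalIntegral.integral_const_mul, ← intervalIntegral.integral_const_mul,
      ← intervalIntegral.integral_sub (((i1 1 c).const_mul _)) ((i2 1 c).const_mul _),
      ← intervalIntegral.integral_add
        ((((i1 1 c).const_mul _)).sub ((i2 1 c).const_mul _)) (i3 1 c)]
    exact intervalIntegral.integral_congr fun x _ => hkey x
  -- values of the three integrals
  have v : ∀ f : ℝ → ℝ, IntervalIntegrable f volume 0 c → IntervalIntegrable f volume 0 1 →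
      (∫ x in (1:ℝ)..c, f x) = (∫ x in (0:ℝ)..c, f x) - ∫ x in (0:ℝ)..1, f x := by
    intro f h0c h01
    rw [intervalIntegral.integral_interval_sub_left h0c h01]
  have e1 : (∫ x in (1:ℝ)..c, |x| ^ (q - 4) * x) = |c| ^ (q - 2) / (q - 2) - 1 / (q - 2) := by
    rw [v _ (i1 0 c) (i1 0 1), odd_integral (by linarith) c, odd_integral (by linarith) 1]
    norm_num [show q - 4 + 2 = q - 2 by ring]
  have e2 : (∫ x in (1:ℝ)..c, |x| ^ (q - 2)) = |c| ^ (q - 2) * c / (q - 1) - 1 / (q - 1) := by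
    rw [v _ (i2 0 c) (i2 0 1), even_integral (by linarith) c, even_integral (by linarith) 1]
    norm_num [show q - 2 + 1 = q - 1 by ring]
  have e3 : (∫ x in (1:ℝ)..c, |x| ^ (q - 2) * x) = |c| ^ q / q - 1 / q := by
    rw [v _ (i3 0 c) (i3 0 1), odd_integral (by linarith) c, odd_integral (by linarith) 1]
    norm_num [show q - 2 + 2 = q by ring]
  -- final algebra
  have hPQ : |c| ^ (q - 2) * c ^ 2 = |c| ^ q := by
    rcases eq_or_ne c 0 with h0 | h0
    · rw [h0]
      simp [Real.zero_rpow hq2, Real.zero_rpow hq0]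
    · have h : (0:ℝ) < |c| := abs_pos.mpr h0
      rw [← sq_abs, sq, ← mul_assoc, ← Real.rpow_add_one h.ne', ← Real.rpow_add_one h.ne']
      congr 1
      ring
  clear_value c
  have ht : t = c - 1 := by rw [hc]; ring
  rw [hsub, hsplit, e1, e2, e3, ← hPQ, ht]
  field_simp
  ring
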